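/- For every integer n ≥ 1: if n is odd then P_n ∩ P_{n+1} = {p_n}, and if n is even then P_n ∩ P_{n+1} = {s_n}; moreover P_{n+1} is the disjoint union of the translate (1,1) + (P_n \ P_{n+1}) and the two-element set {p_{n+1}, s_{n+1}}. -/
import Mathlib


open Pointwise

/-- The submonoid `σ_Z ⊂ ℤ²` of pairs `(a,b)` with `0 ≤ b` and `3b ≤ 4a`. -/
def sigmaZ : Set (ℤ × ℤ) := {a : ℤ × ℤ | 0 ≤ a.2 ∧ 3 * a.2 ≤ 4 * a.1}

/-- The point `p_n`. -/
def pPt (n : ℤ) : ℤ × ℤ := if Odd n then ((n + 3) / 2, 0) else (n / 2 + 1, 0)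

/-- The point `s_n`. -/
def sPt (n : ℤ) : ℤ × ℤ :=
  if Odd n then (3 * (n + 1) / 2, 2 * (n + 1)) else (3 * (n + 2) / 2, 2 * (n + 2))

/-- The point `q^i = (n+1-i, n-2i)`. -/
def qPt (n i : ℤ) : ℤ × ℤ := (n + 1 - i, n - 2 * i)

/-- The point `r^j = (n+1+j, n+1+2j)`. -/
def rPt (n j : ℤ) : ℤ × ℤ := (n + 1 + j, n + 1 + 2 * j)

/-- The set `P_n ⊂ ℤ²`. -/
def Pset (n : ℤ) : Set (ℤ × ℤ) :=
  {pPt n, sPt n}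
    ∪ {x | ∃ i : ℤ, 0 ≤ i ∧ i ≤ (if Odd n then (n - 1) / 2 else (n - 2) / 2) ∧ x = qPt n i}
    ∪ {x | ∃ j : ℤ, 0 ≤ j ∧ j ≤ (if Odd n then (n - 1) / 2 else n / 2) ∧ x = rPt n j}

/-- The set `D_n = σ_Z \ (P_n + σ_Z)`, where `+` is pointwise addition of sets. -/
def Dset (n : ℤ) : Set (ℤ × ℤ) := sigmaZ \ (Pset n + sigmaZ)

lemma memP_odd {n : ℤ} (h : Odd n) (a b : ℤ) :
    (a, b) ∈ Pset n ↔
      (a = (n + 3) / 2 ∧ b = 0) ∨ (a = 3 * (n + 1) / 2 ∧ b = 2 * (n + 1)) ∨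
      (b = 2 * a - n - 2 ∧ a ≤ n + 1 ∧ n + 1 - a ≤ (n - 1) / 2) ∨
      (b = 2 * a - n - 1 ∧ n + 1 ≤ a ∧ a - n - 1 ≤ (n - 1) / 2) := by
  have h2 : n % 2 = 1 := Int.odd_iff.mp h
  simp only [Pset, Set.mem_union, Set.mem_insert_iff, Set.mem_singleton_iff,
    Set.mem_setOf_eq, pPt, sPt, qPt, rPt, if_pos h, Prod.mk.injEq]
  constructor
  · rintro (((⟨h1,h2⟩|⟨h1,h2⟩)|⟨i,hi0,hi1,h1,h2⟩)|⟨j,hj0,hj1,h1,h2⟩) <;> omega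
  · rintro (⟨h1,h2⟩|⟨h1,h2⟩|⟨h1,h2,h3⟩|⟨h1,h2,h3⟩)
    · exact Or.inl (Or.inl (Or.inl ⟨h1, h2⟩))
    · exact Or.inl (Or.inl (Or.inr ⟨h1, h2⟩))
    · exact Or.inl (Or.inr ⟨n + 1 - a, by omega, by omega, by omega, by omega⟩)
    · exact Or.inr ⟨a - n - 1, by omega, by omega, by omega, by omega⟩

lemma memP_even {n : ℤ} (h : ¬ Odd n) (a b : ℤ) :
    (a, b) ∈ Pset n ↔
      (a = n / 2 + 1 ∧ b = 0) ∨ (a = 3 * (n + 2) / 2 ∧ b = 2 * (n + 2)) ∨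
      (b = 2 * a - n - 2 ∧ a ≤ n + 1 ∧ n + 1 - a ≤ (n - 2) / 2) ∨
      (b = 2 * a - n - 1 ∧ n + 1 ≤ a ∧ a - n - 1 ≤ n / 2) := by
  have h2 : n % 2 = 0 := Int.even_iff.mp (Int.not_odd_iff_even.mp h)
  simp only [Pset, Set.mem_union, Set.mem_insert_iff, Set.mem_singleton_iff,
    Set.mem_setOf_eq, pPt, sPt, qPt, rPt, if_neg h, Prod.mk.injEq]
  constructor
  · rintro (((⟨h1,h2⟩|⟨h1,h2⟩)|⟨i,hi0,hi1,h1,h2⟩)|⟨j,hj0,hj1,h1,h2⟩) <;> omega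
  · rintro (⟨h1,h2⟩|⟨h1,h2⟩|⟨h1,h2,h3⟩|⟨h1,h2,h3⟩)
    · exact Or.inl (Or.inl (Or.inl ⟨h1, h2⟩))
    · exact Or.inl (Or.inl (Or.inr ⟨h1, h2⟩))
    · exact Or.inl (Or.inr ⟨n + 1 - a, by omega, by omega, by omega, by omega⟩)
    · exact Or.inr ⟨a - n - 1, by omega, by omega, by omega, by omega⟩

lemma mem_transl (S : Set (ℤ × ℤ)) (a b : ℤ) :
    (a, b) ∈ (fun x => ((1, 1) : ℤ × ℤ) + x) '' S ↔ (a - 1, b - 1) ∈ S := by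
  constructor
  · rintro ⟨⟨c, d⟩, hy, heq⟩
    have hcd : (a - 1, b - 1) = ((c, d) : ℤ × ℤ) := by
      simp [Prod.ext_iff] at heq ⊢; omega
    rwa [hcd]
  · intro hmem
    exact ⟨(a - 1, b - 1), hmem, by simp [Prod.ext_iff]⟩

set_option maxHeartbeats 1000000 in
/-- for every integer `n ≥ 1`: if `n` is odd then `P_n ∩ P_{n+1} = {p_n}`,
if `n` is even then `P_n ∩ P_{n+1} = {s_n}`; moreover `P_{n+1}` is the disjoint union of
`(1,1) + (P_n \ P_{n+1})` and `{p_{n+1}, s_{n+1}}`. -/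
theorem Pset_succ_structure (n : ℕ) (hn : 1 ≤ n) :
    (Odd n → Pset (n : ℤ) ∩ Pset ((n : ℤ) + 1) = {pPt (n : ℤ)}) ∧
    (Even n → Pset (n : ℤ) ∩ Pset ((n : ℤ) + 1) = {sPt (n : ℤ)}) ∧
    Pset ((n : ℤ) + 1) =
      ((fun x => ((1, 1) : ℤ × ℤ) + x) '' (Pset (n : ℤ) \ Pset ((n : ℤ) + 1)))
        ∪ {pPt ((n : ℤ) + 1), sPt ((n : ℤ) + 1)} ∧
    Disjoint ((fun x => ((1, 1) : ℤ × ℤ) + x) '' (Pset (n : ℤ) \ Pset ((n : ℤ) + 1)))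
      {pPt ((n : ℤ) + 1), sPt ((n : ℤ) + 1)} := by
  have h1 : (1 : ℤ) ≤ (n : ℤ) := by exact_mod_cast hn
  rcases Nat.even_or_odd n with he | ho
  · -- n even
    have hno : ¬ Odd ((n : ℤ)) := by
      rw [Int.not_odd_iff_even]; exact_mod_cast he
    have hmod : (n : ℤ) % 2 = 0 := Int.even_iff.mp (Int.not_odd_iff_even.mp hno)
    have hn1 : Odd ((n : ℤ) + 1) := by rw [Int.odd_iff]; omega
    have hint : Pset (n : ℤ) ∩ Pset ((n : ℤ) + 1) = {sPt (n : ℤ)} := by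
      ext ⟨a, b⟩
      rw [Set.mem_inter_iff, memP_even hno, memP_odd hn1]
      simp only [Set.mem_singleton_iff, sPt, if_neg hno, Prod.mk.injEq]
      constructor
      · rintro ⟨h | h | h | h, g | g | g | g⟩ <;> omega
      · rintro ⟨h1', h2'⟩
        exact ⟨Or.inr (Or.inl ⟨by omega, by omega⟩),
          Or.inr (Or.inl ⟨by omega, by omega⟩)⟩
    have hdiff : Pset (n : ℤ) \ Pset ((n : ℤ) + 1) = Pset (n : ℤ) \ {sPt (n : ℤ)} := by
      rw [← Set.diff_self_inter, hint]
    rw [hdiff]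
    refine ⟨fun hodd => (Nat.not_odd_iff_even.mpr he hodd).elim, fun _ => hint, ?_, ?_⟩
    · ext ⟨a, b⟩
      rw [memP_odd hn1, Set.mem_union, mem_transl, Set.mem_diff, memP_even hno]
      simp only [Set.mem_insert_iff, Set.mem_singleton_iff, pPt, sPt, if_pos hn1,
        if_neg hno, Prod.mk.injEq]
      constructor
      · rintro (h | h | h | h)
        · exact Or.inr (Or.inl ⟨by omega, by omega⟩)
        · exact Or.inr (Or.inr ⟨by omega, by omega⟩)
        · by_cases hb : b = 1
          · exact Or.inl ⟨Or.inl ⟨by omega, by omega⟩, by omega⟩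
          · exact Or.inl ⟨Or.inr (Or.inr (Or.inl ⟨by omega, by omega, by omega⟩)),
              by omega⟩
        · exact Or.inl ⟨Or.inr (Or.inr (Or.inr ⟨by omega, by omega, by omega⟩)),
            by omega⟩
      · rintro (⟨h | h | h | h, hne⟩ | h | h)
        · exact Or.inr (Or.inr (Or.inl ⟨by omega, by omega, by omega⟩))
        · omega
        · exact Or.inr (Or.inr (Or.inl ⟨by omega, by omega, by omega⟩))
        · exact Or.inr (Or.inr (Or.inr ⟨by omega, by omega, by omega⟩))
        · exact Or.inl ⟨by omega, by omega⟩
        · exact Or.inr (Or.inl ⟨by omega, by omega⟩)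
    · rw [Set.disjoint_left]
      rintro ⟨a, b⟩ hmem hps
      rw [mem_transl, Set.mem_diff, memP_even hno] at hmem
      simp only [Set.mem_insert_iff, Set.mem_singleton_iff, pPt, sPt, if_pos hn1,
        if_neg hno, Prod.mk.injEq] at hps hmem
      obtain ⟨hm | hm | hm | hm, hne⟩ := hmem <;> rcases hps with g | g <;> omega
  · -- n odd
    have hyo : Odd ((n : ℤ)) := by exact_mod_cast ho
    have hmod : (n : ℤ) % 2 = 1 := Int.odd_iff.mp hyo
    have hn1 : ¬ Odd ((n : ℤ) + 1) := by rw [Int.not_odd_iff_even, Int.even_iff]; omega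
    have hint : Pset (n : ℤ) ∩ Pset ((n : ℤ) + 1) = {pPt (n : ℤ)} := by
      ext ⟨a, b⟩
      rw [Set.mem_inter_iff, memP_odd hyo, memP_even hn1]
      simp only [Set.mem_singleton_iff, pPt, if_pos hyo, Prod.mk.injEq]
      constructor
      · rintro ⟨h | h | h | h, g | g | g | g⟩ <;> omega
      · rintro ⟨h1', h2'⟩
        exact ⟨Or.inl ⟨by omega, by omega⟩, Or.inl ⟨by omega, by omega⟩⟩
    have hdiff : Pset (n : ℤ) \ Pset ((n : ℤ) + 1) = Pset (n : ℤ) \ {pPt (n : ℤ)} := by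
      rw [← Set.diff_self_inter, hint]
    rw [hdiff]
    refine ⟨fun _ => hint, fun heven => (Nat.not_even_iff_odd.mpr ho heven).elim, ?_, ?_⟩
    · ext ⟨a, b⟩
      rw [memP_even hn1, Set.mem_union, mem_transl, Set.mem_diff, memP_odd hyo]
      simp only [Set.mem_insert_iff, Set.mem_singleton_iff, pPt, sPt, if_neg hn1,
        if_pos hyo, Prod.mk.injEq]
      constructor
      · rintro (h | h | h | h)
        · exact Or.inr (Or.inl ⟨by omega, by omega⟩)
        · exact Or.inr (Or.inr ⟨by omega, by omega⟩)
        · exact Or.inl ⟨Or.inr (Or.inr (Or.inl ⟨by omega, by omega, by omega⟩)),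
            by omega⟩
        · by_cases hb : b = 2 * (n : ℤ) + 3
          · exact Or.inl ⟨Or.inr (Or.inl ⟨by omega, by omega⟩), by omega⟩
          · exact Or.inl ⟨Or.inr (Or.inr (Or.inr ⟨by omega, by omega, by omega⟩)),
              by omega⟩
      · rintro (⟨h | h | h | h, hne⟩ | h | h)
        · omega
        · exact Or.inr (Or.inr (Or.inr ⟨by omega, by omega, by omega⟩))
        · exact Or.inr (Or.inr (Or.inl ⟨by omega, by omega, by omega⟩))
        · exact Or.inr (Or.inr (Or.inr ⟨by omega, by omega, by omega⟩))
        · exact Or.inl ⟨by omega, by omega⟩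
        · exact Or.inr (Or.inl ⟨by omega, by omega⟩)
    · rw [Set.disjoint_left]
      rintro ⟨a, b⟩ hmem hps
      rw [mem_transl, Set.mem_diff, memP_odd hyo] at hmem
      simp only [Set.mem_insert_iff, Set.mem_singleton_iff, pPt, sPt, if_neg hn1,
        if_pos hyo, Prod.mk.injEq] at hps hmem
      obtain ⟨hm | hm | hm | hm, hne⟩ := hmem <;> rcases hps with g | g <;> omega
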